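/- Let W_A, W_C be random vectors taking values in L_A = L_A^1 ∪ L_A^2 and L_C = L_C^1 ∪ L_C^2 respectively, where L_k^1 = [0,1]^{|k|} and L_k^2 = [0,∞)^{|k|} \ [0,1]^{|k|}. Suppose that for all measurable H_A ⊂ L_A and H_C ⊂ L_C: (a) P(W_C ∈ H_C | W_A ∈ H_A^2) = P(W_C ∈ H_C | W_A ∈ L_A^2) whenever H_A^2 ⊂ L_A^2 has positive probability, and (b) the symmetric statement holds conditioning on W_C ∈ H_C^2 ⊂ L_C^2, and (c) P(W_A ∈ H_A^1, W_C ∈ H_C^1) = P(W_A ∈ H_A^1, W_C ∈ L_C^2)·P(W_A ∈ L_A^2, W_C ∈ H_C^1)/P(W_A ∈ L_A^2, W_C ∈ L_C^2) for all measurable H_A^1 ⊂ L_A^1, H_C^1 ⊂ L_C^1. Then for all measurable H_A^1 ⊂ L_A^1, H_C^1 ⊂ L_C^1, H_A^2 ⊂ L_A^2, H_C^2 ⊂ L_C^2 with nonzero denominators: P(W_A ∈ H_A^1, W_C ∈ H_C^1)/P(W_A ∈ H_A^2, W_C ∈ H_C^1) = P(W_A ∈ H_A^1, W_C ∈ H_C^2)/P(W_A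 ∈ H_A^2, W_C ∈ H_C^2). -/

import Mathlib

open MeasureTheory ProbabilityTheory Set
open scoped ENNReal

noncomputable section

/-- `L^1 = [0,1]^ι`. -/
def box1 (ι : Type*) : Set (ι → ℝ) := {x | ∀ i, x i ∈ Set.Icc (0:ℝ) 1}

/-- `L^2 = [0,∞)^ι \ [0,1]^ι`. -/
def box2 (ι : Type*) : Set (ι → ℝ) := {x | ∀ i, 0 ≤ x i} \ box1 ι

/-- Every measurable set in a product σ-algebra depends on countably many coordinates. -/
lemma exists_countable_depends {ι : Type} (E : Set (ι → ℝ)) (hE : MeasurableSet E) :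
    ∃ S : Set ι, S.Countable ∧ ∀ x y : ι → ℝ, (∀ i ∈ S, x i = y i) → (x ∈ E ↔ y ∈ E) := by
  let m' : MeasurableSpace (ι → ℝ) :=
    { MeasurableSet' := fun E =>
        ∃ S : Set ι, S.Countable ∧ ∀ x y : ι → ℝ, (∀ i ∈ S, x i = y i) → (x ∈ E ↔ y ∈ E)
      measurableSet_empty := ⟨∅, countable_empty, by simp⟩
      measurableSet_compl := by
        rintro E ⟨S, hS, h⟩
        exact ⟨S, hS, fun x y hxy => by simp only [Set.mem_compl_iff, h x y hxy]⟩
      measurableSet_iUnion := by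
        intro f hf
        choose S hS h using hf
        refine ⟨⋃ n, S n, Set.countable_iUnion hS, fun x y hxy => ?_⟩
        simp only [Set.mem_iUnion]
        exact exists_congr fun n => h n x y fun i hi => hxy i (Set.mem_iUnion.2 ⟨n, hi⟩) }
  have hle : (MeasurableSpace.pi : MeasurableSpace (ι → ℝ)) ≤ m' := by
    refine iSup_le fun i => ?_
    rintro E ⟨B, hB, rfl⟩
    refine ⟨{i}, Set.countable_singleton i, fun x y hxy => ?_⟩
    simp only [Set.mem_preimage, hxy i rfl]
  exact hle E hE

/-- A nonempty measurable subset of `box2 ι` forces `ι` to be countable. -/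
lemma countable_of_measurable_subset_box2 {ι : Type} {E : Set (ι → ℝ)}
    (hE : MeasurableSet E) (hne : E.Nonempty) (hsub : E ⊆ box2 ι) : Countable ι := by
  classical
  obtain ⟨S, hS, h⟩ := exists_countable_depends E hE
  obtain ⟨x, hx⟩ := hne
  have hall : ∀ j, j ∈ S := by
    intro j
    by_contra hj
    have hy : Function.update x j (-1) ∈ E := by
      refine (h x (Function.update x j (-1)) fun i hi => ?_).mp hx
      rw [Function.update_of_ne (show i ≠ j from fun hij => hj (by rw [← hij]; exact hi))]
    have h0 : (0:ℝ) ≤ Function.update x j (-1) j := (hsub hy).1 j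
    rw [Function.update_self] at h0
    linarith
  have : S = Set.univ := Set.eq_univ_of_forall hall
  rw [this, Set.countable_univ_iff] at hS
  exact hS

lemma ennreal_inv_mul_eq {a b u v : ℝ≥0∞} (ha : a ≠ 0) (ha' : a ≠ ∞)
    (hb : b ≠ 0) (hb' : b ≠ ∞) (h : a⁻¹ * u = b⁻¹ * v) : u * b = a * v := by
  calc u * b = (a * a⁻¹) * u * b := by rw [ENNReal.mul_inv_cancel ha ha', one_mul]
    _ = a * (a⁻¹ * u) * b := by ring
    _ = a * (b⁻¹ * v) * b := by rw [h]
    _ = a * v * (b⁻¹ * b) := by ring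
    _ = a * v := by rw [ENNReal.inv_mul_cancel hb hb', mul_one]

lemma box1_measurable {ι : Type} [Countable ι] : MeasurableSet (box1 ι) := by
  have : box1 ι = Set.pi Set.univ fun _ : ι => Set.Icc (0:ℝ) 1 := by
    ext x; simp [box1, Set.mem_pi, Pi.le_def, forall_and]
  rw [this]
  exact MeasurableSet.univ_pi fun _ => measurableSet_Icc

lemma box2_measurable {ι : Type} [Countable ι] : MeasurableSet (box2 ι) := by
  have hnn : MeasurableSet {x : ι → ℝ | ∀ i, 0 ≤ x i} := by
    have : {x : ι → ℝ | ∀ i, 0 ≤ x i} = Set.pi Set.univ fun _ : ι => Set.Ici (0:ℝ) := by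
      ext x; simp [Set.mem_pi, Pi.le_def]
    rw [this]
    exact MeasurableSet.univ_pi fun _ => measurableSet_Ici
  exact hnn.diff box1_measurable

/-- under conditional independence of `W_A, W_C` given `{W_A ∈ L_A^2}` and given
`{W_C ∈ L_C^2}`, and the product/ratio definition of the joint probability on `L_A^1 × L_C^1`,
the cross-ratio consistency identity holds. -/
theorem stmt3 {Ω₀ ιA ιC : Type} [MeasurableSpace Ω₀]
    (μ : Measure Ω₀) [IsProbabilityMeasure μ]
    (WA : Ω₀ → ιA → ℝ) (WC : Ω₀ → ιC → ℝ)
    (hWA : Measurable WA) (hWC : Measurable WC)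
    -- all four block probabilities are positive
    (h11 : 0 < μ (WA ⁻¹' box1 ιA ∩ WC ⁻¹' box1 ιC))
    (h12 : 0 < μ (WA ⁻¹' box1 ιA ∩ WC ⁻¹' box2 ιC))
    (h21 : 0 < μ (WA ⁻¹' box2 ιA ∩ WC ⁻¹' box1 ιC))
    (h22 : 0 < μ (WA ⁻¹' box2 ιA ∩ WC ⁻¹' box2 ιC))
    -- (a) conditioning on a positive-probability subset of {W_A ∈ L_A^2} is the same as
    -- conditioning on {W_A ∈ L_A^2}
    (ha : ∀ HA2 : Set (ιA → ℝ), MeasurableSet HA2 → HA2 ⊆ box2 ιA →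
      μ (WA ⁻¹' HA2) ≠ 0 →
      ∀ HC : Set (ιC → ℝ), MeasurableSet HC →
        μ[|WA ⁻¹' HA2] (WC ⁻¹' HC) = μ[|WA ⁻¹' box2 ιA] (WC ⁻¹' HC))
    -- (b) symmetrically, conditioning on a positive-probability subset of {W_C ∈ L_C^2}
    (hb : ∀ HC2 : Set (ιC → ℝ), MeasurableSet HC2 → HC2 ⊆ box2 ιC →
      μ (WC ⁻¹' HC2) ≠ 0 →
      ∀ HA : Set (ιA → ℝ), MeasurableSet HA →
        μ[|WC ⁻¹' HC2] (WA ⁻¹' HA) = μ[|WC ⁻¹' box2 ιC] (WA ⁻¹' HA))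
    -- (c) the product formula on L_A^1 × L_C^1
    (hc : ∀ (HA1 : Set (ιA → ℝ)) (HC1 : Set (ιC → ℝ)),
      MeasurableSet HA1 → MeasurableSet HC1 → HA1 ⊆ box1 ιA → HC1 ⊆ box1 ιC →
      μ (WA ⁻¹' HA1 ∩ WC ⁻¹' HC1) =
        μ (WA ⁻¹' HA1 ∩ WC ⁻¹' box2 ιC) * μ (WA ⁻¹' box2 ιA ∩ WC ⁻¹' HC1) /
          μ (WA ⁻¹' box2 ιA ∩ WC ⁻¹' box2 ιC)) :
    ∀ (HA1 HA2 : Set (ιA → ℝ)) (HC1 HC2 : Set (ιC → ℝ)),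
      MeasurableSet HA1 → MeasurableSet HA2 → MeasurableSet HC1 → MeasurableSet HC2 →
      HA1 ⊆ box1 ιA → HA2 ⊆ box2 ιA → HC1 ⊆ box1 ιC → HC2 ⊆ box2 ιC →
      μ (WA ⁻¹' HA2 ∩ WC ⁻¹' HC1) ≠ 0 → μ (WA ⁻¹' HA2 ∩ WC ⁻¹' HC2) ≠ 0 →
      μ (WA ⁻¹' HA1 ∩ WC ⁻¹' HC1) / μ (WA ⁻¹' HA2 ∩ WC ⁻¹' HC1) =
        μ (WA ⁻¹' HA1 ∩ WC ⁻¹' HC2) / μ (WA ⁻¹' HA2 ∩ WC ⁻¹' HC2) := by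
  intro HA1 HA2 HC1 HC2 mA1 mA2 mC1 mC2 sA1 sA2 sC1 sC2 hne21 hne22
  -- `HA2` and `HC2` are nonempty, hence `ιA` and `ιC` are countable
  have hA2ne : HA2.Nonempty := by
    rcases HA2.eq_empty_or_nonempty with h | h
    · exfalso; apply hne21; rw [h]; simp
    · exact h
  have hC2ne : HC2.Nonempty := by
    rcases HC2.eq_empty_or_nonempty with h | h
    · exfalso; apply hne22; rw [h]; simp
    · exact h
  have : Countable ιA := countable_of_measurable_subset_box2 mA2 hA2ne sA2
  have : Countable ιC := countable_of_measurable_subset_box2 mC2 hC2ne sC2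
  have mb2A : MeasurableSet (box2 ιA) := box2_measurable
  have mb2C : MeasurableSet (box2 ιC) := box2_measurable
  -- abbreviations and basic positivity / finiteness facts
  set pA := μ (WA ⁻¹' box2 ιA) with hpA
  set pC := μ (WC ⁻¹' box2 ιC) with hpC
  set Z := μ (WA ⁻¹' box2 ιA ∩ WC ⁻¹' box2 ιC) with hZ
  have hfin : ∀ s : Set Ω₀, μ s ≠ ∞ := fun s => measure_ne_top μ s
  have hpAt : pA ≠ ∞ := by rw [hpA]; exact hfin _
  have hpCt : pC ≠ ∞ := by rw [hpC]; exact hfin _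
  have hZt : Z ≠ ∞ := by rw [hZ]; exact hfin _
  have hpA0 : pA ≠ 0 := by
    intro h
    exact absurd (le_antisymm (h ▸ measure_mono Set.inter_subset_left) zero_le) h22.ne'
  have hpC0 : pC ≠ 0 := by
    intro h
    exact absurd (le_antisymm (h ▸ measure_mono Set.inter_subset_right) zero_le) h22.ne'
  have hZ0 : Z ≠ 0 := h22.ne'
  have ha2 : μ (WA ⁻¹' HA2) ≠ 0 := by
    intro h
    exact absurd (le_antisymm (h ▸ measure_mono Set.inter_subset_left) zero_le) hne21
  have hc2 : μ (WC ⁻¹' HC2) ≠ 0 := by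
    intro h
    exact absurd (le_antisymm (h ▸ measure_mono Set.inter_subset_right) zero_le) hne22
  -- key consequence of (a)
  have keyA : ∀ T : Set (ιC → ℝ), MeasurableSet T →
      μ (WA ⁻¹' HA2 ∩ WC ⁻¹' T) * pA =
        μ (WA ⁻¹' HA2) * μ (WA ⁻¹' box2 ιA ∩ WC ⁻¹' T) := by
    intro T mT
    have h := ha HA2 mA2 sA2 ha2 T mT
    rw [cond_apply (hWA mA2) μ, cond_apply (hWA mb2A) μ] at h
    exact ennreal_inv_mul_eq ha2 (hfin _) hpA0 (hfin _) h
  -- key consequence of (b), with intersections written in (A, C) order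
  have keyB : ∀ T : Set (ιA → ℝ), MeasurableSet T →
      μ (WA ⁻¹' T ∩ WC ⁻¹' HC2) * pC =
        μ (WC ⁻¹' HC2) * μ (WA ⁻¹' T ∩ WC ⁻¹' box2 ιC) := by
    intro T mT
    have h := hb HC2 mC2 sC2 hc2 T mT
    rw [cond_apply (hWC mC2) μ, cond_apply (hWC mb2C) μ] at h
    have h' := ennreal_inv_mul_eq hc2 (hfin _) hpC0 (hfin _) h
    rwa [Set.inter_comm (WC ⁻¹' HC2), Set.inter_comm (WC ⁻¹' box2 ιC)] at h'
  have e1 := keyA HC1 mC1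
  have e2 := keyA HC2 mC2
  have e3 := keyB HA1 mA1
  have e4 := keyB (box2 ιA) mb2A
  have e5 : μ (WA ⁻¹' HA1 ∩ WC ⁻¹' HC1) * Z =
      μ (WA ⁻¹' HA1 ∩ WC ⁻¹' box2 ιC) * μ (WA ⁻¹' box2 ιA ∩ WC ⁻¹' HC1) := by
    rw [hc HA1 HC1 mA1 mC1 sA1 sC1, ENNReal.div_mul_cancel hZ0 hZt]
  -- The cross-multiplied identity
  have key : μ (WA ⁻¹' HA2 ∩ WC ⁻¹' HC2) * μ (WA ⁻¹' HA1 ∩ WC ⁻¹' HC1) =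
      μ (WA ⁻¹' HA2 ∩ WC ⁻¹' HC1) * μ (WA ⁻¹' HA1 ∩ WC ⁻¹' HC2) := by
    have hcancel : pA * pC * Z ≠ 0 := by
      simp [hpA0, hpC0, hZ0]
    have hcancel' : pA * pC * Z ≠ ∞ :=
      ENNReal.mul_ne_top (ENNReal.mul_ne_top hpAt hpCt) hZt
    rw [← ENNReal.mul_left_inj hcancel hcancel']
    calc μ (WA ⁻¹' HA2 ∩ WC ⁻¹' HC2) * μ (WA ⁻¹' HA1 ∩ WC ⁻¹' HC1) * (pA * pC * Z)
        = (μ (WA ⁻¹' HA1 ∩ WC ⁻¹' HC1) * Z) *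
            ((μ (WA ⁻¹' HA2 ∩ WC ⁻¹' HC2) * pA) * pC) := by ring
      _ = (μ (WA ⁻¹' HA1 ∩ WC ⁻¹' box2 ιC) * μ (WA ⁻¹' box2 ιA ∩ WC ⁻¹' HC1)) *
            ((μ (WA ⁻¹' HA2) * μ (WA ⁻¹' box2 ιA ∩ WC ⁻¹' HC2)) * pC) := by
          rw [e5, e2]
      _ = (μ (WA ⁻¹' HA1 ∩ WC ⁻¹' box2 ιC) * μ (WA ⁻¹' box2 ιA ∩ WC ⁻¹' HC1)) *
            (μ (WA ⁻¹' HA2) * (μ (WA ⁻¹' box2 ιA ∩ WC ⁻¹' HC2) * pC)) := by ring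
      _ = (μ (WA ⁻¹' HA1 ∩ WC ⁻¹' box2 ιC) * μ (WA ⁻¹' box2 ιA ∩ WC ⁻¹' HC1)) *
            (μ (WA ⁻¹' HA2) * (μ (WC ⁻¹' HC2) * Z)) := by
          rw [e4]
      _ = ((μ (WC ⁻¹' HC2) * μ (WA ⁻¹' HA1 ∩ WC ⁻¹' box2 ιC)) *
            ((μ (WA ⁻¹' HA2) * μ (WA ⁻¹' box2 ιA ∩ WC ⁻¹' HC1)))) * Z := by ring
      _ = ((μ (WA ⁻¹' HA1 ∩ WC ⁻¹' HC2) * pC) * (μ (WA ⁻¹' HA2 ∩ WC ⁻¹' HC1) * pA)) * Z := by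
          rw [e3, e1]
      _ = μ (WA ⁻¹' HA2 ∩ WC ⁻¹' HC1) * μ (WA ⁻¹' HA1 ∩ WC ⁻¹' HC2) * (pA * pC * Z) := by ring
  rw [ENNReal.div_eq_div_iff hne22 (hfin _) hne21 (hfin _)]
  exact key

end
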